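/- arXiv:2512.15797 — 2 statements merged into one kernel-verified Lean document; each statement's English description precedes it below -/
import Mathlib

section
/- For every integer n ≥ 2 and every real x > 0, the double inequality n(2n+1)/((n+1)(2n+3)) < T_sin n x / T_sin (n+1) x < 1 holds. -/
open Real

noncomputable def Ssin (m : ℕ) (x : ℝ) : ℝ :=
  ∑ k ∈ Finset.range m, (-1 : ℝ) ^ k * x ^ (2 * k + 1) / (Nat.factorial (2 * k + 1))

noncomputable def Ccos (m : ℕ) (x : ℝ) : ℝ :=
  ∑ k ∈ Finset.range m, (-1 : ℝ) ^ k * x ^ (2 * k) / (Nat.factorial (2 * k))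

noncomputable def rho (m : ℕ) (x : ℝ) : ℝ := (-1 : ℝ) ^ m * (Real.sin x - Ssin m x)

noncomputable def sig (m : ℕ) (x : ℝ) : ℝ := (-1 : ℝ) ^ m * (Real.cos x - Ccos m x)

lemma hasDerivAt_Ssin (m : ℕ) (x : ℝ) : HasDerivAt (Ssin m) (Ccos m x) x := by
  unfold Ssin Ccos
  apply HasDerivAt.fun_sum
  intro k _
  have h : HasDerivAt (fun y : ℝ => y ^ (2 * k + 1)) (((2*k+1 : ℕ) : ℝ) * x ^ (2 * k)) x := by
    simpa using hasDerivAt_pow (2 * k + 1) x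
  have h2 := (h.const_mul ((-1 : ℝ) ^ k)).div_const ((Nat.factorial (2 * k + 1) : ℝ))
  refine h2.congr_deriv ?_
  have hfac : (Nat.factorial (2 * k + 1) : ℝ) = ((2*k+1 : ℕ) : ℝ) * (Nat.factorial (2 * k) : ℝ) := by
    rw [Nat.factorial_succ]; push_cast; ring
  have hpos : (Nat.factorial (2 * k) : ℝ) ≠ 0 := Nat.cast_ne_zero.2 (Nat.factorial_ne_zero _)
  have hpos1 : ((2*k+1:ℕ) : ℝ) ≠ 0 := by positivity
  rw [hfac]
  field_simp

lemma hasDerivAt_Ccos (m : ℕ) (x : ℝ) : HasDerivAt (Ccos (m+1)) (-(Ssin m x)) x := by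
  unfold Ssin Ccos
  have : HasDerivAt (fun y : ℝ => ∑ k ∈ Finset.range (m+1), (-1 : ℝ) ^ k * y ^ (2 * k) / (Nat.factorial (2 * k)))
      (∑ k ∈ Finset.range (m+1), (if k = 0 then (0:ℝ) else (-1 : ℝ) ^ k * x ^ (2 * k - 1) / (Nat.factorial (2 * k - 1)))) x := by
    apply HasDerivAt.fun_sum
    intro k _
    rcases Nat.eq_zero_or_pos k with hk | hk
    · subst hk
      have hfun : (fun y : ℝ => (-1 : ℝ) ^ 0 * y ^ (2 * 0) / (Nat.factorial (2 * 0))) = fun _ => (1:ℝ) := by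
        funext y; norm_num
      simp only [if_pos rfl, hfun]
      exact hasDerivAt_const x 1
    · have h : HasDerivAt (fun y : ℝ => y ^ (2 * k)) (((2*k : ℕ) : ℝ) * x ^ (2 * k - 1)) x := by
        simpa using hasDerivAt_pow (2 * k) x
      have h2 := (h.const_mul ((-1 : ℝ) ^ k)).div_const ((Nat.factorial (2 * k) : ℝ))
      simp only [if_neg (Nat.pos_iff_ne_zero.mp hk)]
      refine h2.congr_deriv ?_
      have h2k : 2 * k = (2*k - 1) + 1 := by omega
      have hfac : (Nat.factorial (2 * k) : ℝ) = ((2*k : ℕ) : ℝ) * (Nat.factorial (2 * k - 1) : ℝ) := by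
        rw [h2k, Nat.factorial_succ]; push_cast; try ring
      have hpos : (Nat.factorial (2 * k - 1) : ℝ) ≠ 0 := Nat.cast_ne_zero.2 (Nat.factorial_ne_zero _)
      have hpos1 : ((2*k:ℕ) : ℝ) ≠ 0 := by positivity
      rw [hfac]
      field_simp
  convert this using 1
  rw [Finset.sum_range_succ']
  simp only [if_neg (Nat.succ_ne_zero _), if_true, add_zero]
  rw [← Finset.sum_neg_distrib]
  apply Finset.sum_congr rfl
  intro k _
  have h1 : 2 * (k+1) - 1 = 2 * k + 1 := by omega
  rw [h1, pow_succ]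
  ring

lemma hasDerivAt_rho (m : ℕ) (x : ℝ) : HasDerivAt (rho m) (sig m x) x := by
  unfold rho sig
  exact ((Real.hasDerivAt_sin x).sub (hasDerivAt_Ssin m x)).const_mul _

lemma hasDerivAt_sig (m : ℕ) (x : ℝ) : HasDerivAt (sig (m+1)) (rho m x) x := by
  have h := ((Real.hasDerivAt_cos x).sub (hasDerivAt_Ccos m x)).const_mul ((-1:ℝ)^(m+1))
  unfold rho sig
  refine h.congr_deriv ?_
  rw [pow_succ]
  ring

lemma Ssin_zero (m : ℕ) : Ssin m 0 = 0 := by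
  unfold Ssin
  apply Finset.sum_eq_zero
  intro k _
  simp [pow_succ]

lemma rho_zero (m : ℕ) : rho m 0 = 0 := by
  unfold rho; rw [Ssin_zero, Real.sin_zero]; ring

lemma Ccos_succ_zero (m : ℕ) : Ccos (m+1) 0 = 1 := by
  unfold Ccos
  rw [Finset.sum_range_succ']
  have : ∀ k ∈ Finset.range m, (-1:ℝ)^(k+1) * (0:ℝ)^(2*(k+1)) / (Nat.factorial (2*(k+1))) = 0 := by
    intro k _
    have : (2*(k+1)) = 2*k+1+1 := by omega
    simp [this, pow_succ]
  rw [Finset.sum_eq_zero this]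
  norm_num

lemma sig_succ_zero (m : ℕ) : sig (m+1) 0 = 0 := by
  unfold sig; rw [Ccos_succ_zero, Real.cos_zero]; ring

lemma neg_one_pow_sq (m : ℕ) : ((-1:ℝ))^(m*2) = 1 := by
  exact Even.neg_one_pow ⟨m, by ring⟩

lemma rho_succ (m : ℕ) (x : ℝ) :
    rho (m+1) x = x^(2*m+1)/(Nat.factorial (2*m+1)) - rho m x := by
  unfold rho Ssin
  rw [Finset.sum_range_succ, pow_succ]
  have h := neg_one_pow_sq m
  linear_combination (x^(2*m+1)/(Nat.factorial (2*m+1))) * h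

lemma sig_succ (m : ℕ) (x : ℝ) :
    sig (m+1) x = x^(2*m)/(Nat.factorial (2*m)) - sig m x := by
  unfold sig Ccos
  rw [Finset.sum_range_succ, pow_succ]
  have h := neg_one_pow_sq m
  linear_combination (x^(2*m)/(Nat.factorial (2*m))) * h

lemma continuous_rho (m : ℕ) : Continuous (rho m) :=
  (Differentiable.continuous fun x => (hasDerivAt_rho m x).differentiableAt)

lemma continuous_sig_succ (m : ℕ) : Continuous (sig (m+1)) :=
  (Differentiable.continuous fun x => (hasDerivAt_sig m x).differentiableAt)

/-- If `f 0 = 0`, `f' = g` everywhere, and `g > 0` on `(0,∞)`, then `f > 0` on `(0,∞)`. -/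
lemma pos_aux {f g : ℝ → ℝ} (hf : ∀ t, HasDerivAt f (g t) t) (h0 : f 0 = 0)
    (hg : ∀ t, 0 < t → 0 < g t) : ∀ x, 0 < x → 0 < f x := by
  intro x hx
  have hmono : StrictMonoOn f (Set.Ici (0:ℝ)) := by
    apply strictMonoOn_of_deriv_pos (convex_Ici 0)
    · exact (Differentiable.continuous fun t => (hf t).differentiableAt).continuousOn
    · intro t ht
      rw [interior_Ici] at ht
      rw [(hf t).deriv]
      exact hg t ht
  have := hmono (Set.self_mem_Ici) (Set.mem_Ici.2 hx.le) hx
  rwa [h0] at this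

lemma rho_sig_pos (m : ℕ) :
    (∀ x, 0 < x → 0 < rho (m+1) x) ∧ (∀ x, 0 < x → 0 < sig (m+2) x) := by
  induction m with
  | zero =>
    have h1 : ∀ x, 0 < x → 0 < rho 1 x := by
      intro x hx
      have : rho 1 x = x - Real.sin x := by
        unfold rho Ssin
        norm_num
      rw [this]
      linarith [Real.sin_lt hx]
    exact ⟨h1, pos_aux (fun t => hasDerivAt_sig 1 t) (sig_succ_zero 1) h1⟩
  | succ m ih =>
    have h1 : ∀ x, 0 < x → 0 < rho (m+2) x :=
      pos_aux (fun t => hasDerivAt_rho (m+2) t) (rho_zero (m+2)) ih.2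
    exact ⟨h1, pos_aux (fun t => hasDerivAt_sig (m+2) t) (sig_succ_zero (m+2)) h1⟩

lemma rho_pos (m : ℕ) (hm : 1 ≤ m) {x : ℝ} (hx : 0 < x) : 0 < rho m x := by
  obtain ⟨k, rfl⟩ : ∃ k, m = k + 1 := ⟨m - 1, by omega⟩
  exact (rho_sig_pos k).1 x hx

lemma rho_nonneg (m : ℕ) (hm : 1 ≤ m) {x : ℝ} (hx : 0 ≤ x) : 0 ≤ rho m x := by
  rcases eq_or_lt_of_le hx with h | h
  · rw [← h, rho_zero]
  · exact (rho_pos m hm h).le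

lemma sig_pos (m : ℕ) (hm : 2 ≤ m) {x : ℝ} (hx : 0 < x) : 0 < sig m x := by
  obtain ⟨k, rfl⟩ : ∃ k, m = k + 2 := ⟨m - 2, by omega⟩
  exact (rho_sig_pos k).2 x hx

lemma sig_nonneg (m : ℕ) (hm : 1 ≤ m) {x : ℝ} (hx : 0 ≤ x) : 0 ≤ sig m x := by
  rcases Nat.lt_or_ge m 2 with h2 | h2
  · have hm1 : m = 1 := by omega
    subst hm1
    have : sig 1 x = 1 - Real.cos x := by
      unfold sig Ccos
      norm_num
    rw [this]
    linarith [Real.cos_le_one x]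
  · rcases eq_or_lt_of_le hx with h | h
    · obtain ⟨k, rfl⟩ : ∃ k, m = k + 1 := ⟨m - 1, by omega⟩
      rw [← h, sig_succ_zero]
    · exact (sig_pos m h2 h).le

noncomputable def Ac (m : ℕ) : ℝ := (2*(m:ℝ)+2)*(2*(m:ℝ)+3)

noncomputable def phi (m : ℕ) (x : ℝ) : ℝ :=
  Ac m * x^(2*m+1)/(Nat.factorial (2*m+1)) - (Ac m + x^2) * rho m x

noncomputable def phi1 (m : ℕ) (x : ℝ) : ℝ :=
  Ac m * x^(2*m)/(Nat.factorial (2*m)) - 2*x*rho m x - (Ac m + x^2) * sig m x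

noncomputable def hh (m : ℕ) (x : ℝ) : ℝ := 2 * rho (m+1) x + 4*x*sig (m+1) x

noncomputable def hh1 (m : ℕ) (x : ℝ) : ℝ := 6 * sig (m+1) x + 4*x*rho m x

lemma fact_cast_succ (k : ℕ) :
    (Nat.factorial (k+1) : ℝ) = ((k:ℝ)+1) * (Nat.factorial k : ℝ) := by
  rw [Nat.factorial_succ]; push_cast; ring

lemma fact_ne_zero' (k : ℕ) : (Nat.factorial k : ℝ) ≠ 0 :=
  Nat.cast_ne_zero.2 (Nat.factorial_ne_zero _)

lemma hasDerivAt_phi (m : ℕ) (x : ℝ) : HasDerivAt (phi m) (phi1 m x) x := by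
  have h1 : HasDerivAt (fun y : ℝ => Ac m * y^(2*m+1)/(Nat.factorial (2*m+1)))
      (Ac m * (((2*m+1 : ℕ):ℝ) * x^(2*m))/(Nat.factorial (2*m+1))) x := by
    exact (((hasDerivAt_pow (2*m+1) x).congr_deriv (by push_cast; ring)).const_mul (Ac m)).div_const _
  have h2 : HasDerivAt (fun y : ℝ => (Ac m + y^2) * rho m y)
      (2*x*rho m x + (Ac m + x^2) * sig m x) x := by
    have ha : HasDerivAt (fun y : ℝ => Ac m + y^2) (2*x) x := by
      simpa using ((hasDerivAt_pow 2 x).const_add (Ac m))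
    exact (ha.mul (hasDerivAt_rho m x)).congr_deriv (by ring)
  refine (h1.sub h2).congr_deriv ?_
  unfold phi1
  have e1 : 2*m+1 = (2*m)+1 := rfl
  rw [e1, fact_cast_succ (2*m)]
  have := fact_ne_zero' (2*m)
  field_simp
  push_cast
  ring

lemma hasDerivAt_hh (m : ℕ) (x : ℝ) : HasDerivAt (hh m) (hh1 m x) x := by
  have h1 := (hasDerivAt_rho (m+1) x).const_mul (2:ℝ)
  have h2 : HasDerivAt (fun y : ℝ => 4*y*sig (m+1) y)
      (4*sig (m+1) x + 4*x*rho m x) x := by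
    have ha : HasDerivAt (fun y : ℝ => 4*y) (4:ℝ) x := by
      simpa using (hasDerivAt_id x).const_mul (4:ℝ)
    exact (ha.mul (hasDerivAt_sig m x)).congr_deriv (by ring)
  exact (h1.add h2).congr_deriv (by unfold hh1; ring)

lemma hasDerivAt_phi1 (m : ℕ) (x : ℝ) :
    HasDerivAt (phi1 (m+1)) (hh (m+1) x - phi (m+1) x) x := by
  have h1 : HasDerivAt (fun y : ℝ => Ac (m+1) * y^(2*(m+1))/(Nat.factorial (2*(m+1))))
      (Ac (m+1) * (((2*(m+1) : ℕ):ℝ) * x^(2*m+1))/(Nat.factorial (2*(m+1)))) x := by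
    refine (((hasDerivAt_pow (2*(m+1)) x).congr_deriv ?_).const_mul (Ac (m+1))).div_const _
    push_cast
    have e : 2*(m+1) - 1 = 2*m+1 := by omega
    rw [e]
  have h2 : HasDerivAt (fun y : ℝ => 2*y*rho (m+1) y)
      (2*rho (m+1) x + 2*x*sig (m+1) x) x := by
    have ha : HasDerivAt (fun y : ℝ => 2*y) (2:ℝ) x := by
      simpa using (hasDerivAt_id x).const_mul (2:ℝ)
    exact (ha.mul (hasDerivAt_rho (m+1) x)).congr_deriv (by ring)
  have h3 : HasDerivAt (fun y : ℝ => (Ac (m+1) + y^2) * sig (m+1) y)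
      (2*x*sig (m+1) x + (Ac (m+1) + x^2) * rho m x) x := by
    have ha : HasDerivAt (fun y : ℝ => Ac (m+1) + y^2) (2*x) x := by
      simpa using ((hasDerivAt_pow 2 x).const_add (Ac (m+1)))
    exact (ha.mul (hasDerivAt_sig m x)).congr_deriv (by ring)
  refine ((h1.sub h2).sub h3).congr_deriv ?_
  -- now the algebraic identity
  unfold hh phi
  rw [rho_succ (m+1) x, sig_succ (m+1) x, rho_succ m x]
  have e1 : 2*(m+1)+1 = 2*m+3 := by ring
  have e2 : 2*(m+1) = 2*m+2 := by ring
  rw [e1, e2]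
  have f1 : (Nat.factorial (2*m+2) : ℝ) = (2*(m:ℝ)+2) * (Nat.factorial (2*m+1)) := by
    have := fact_cast_succ (2*m+1)
    rw [show (2*m+1)+1 = 2*m+2 from by ring] at this
    rw [this]; push_cast; ring
  have f2 : (Nat.factorial (2*m+3) : ℝ) = (2*(m:ℝ)+3) * (Nat.factorial (2*m+2)) := by
    have := fact_cast_succ (2*m+2)
    rw [show (2*m+2)+1 = 2*m+3 from by ring] at this
    rw [this]; push_cast; ring
  have g1 := fact_ne_zero' (2*m+1)
  have g2 := fact_ne_zero' (2*m+2)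
  have g3 := fact_ne_zero' (2*m+3)
  unfold Ac
  rw [f2, f1]
  push_cast
  field_simp
  ring

lemma phi_zero (m : ℕ) : phi m 0 = 0 := by
  unfold phi
  rw [rho_zero, zero_pow (by omega : 2*m+1 ≠ 0)]
  ring

lemma phi1_succ_zero (m : ℕ) : phi1 (m+1) 0 = 0 := by
  unfold phi1
  rw [rho_zero, sig_succ_zero, zero_pow (by omega : 2*(m+1) ≠ 0)]
  ring

lemma hh_zero (m : ℕ) : hh m 0 = 0 := by
  unfold hh
  rw [rho_zero]
  ring

lemma hh1_nonneg (m : ℕ) (hm : 1 ≤ m) {t : ℝ} (ht : 0 ≤ t) : 0 ≤ hh1 m t := by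
  unfold hh1
  have h1 := sig_nonneg (m+1) (by omega) ht
  have h2 := rho_nonneg m hm ht
  positivity

lemma hh1_pos (m : ℕ) (hm : 1 ≤ m) {t : ℝ} (ht : 0 < t) : 0 < hh1 m t := by
  unfold hh1
  have h1 := sig_pos (m+1) (by omega) ht
  have h2 := rho_pos m hm ht
  positivity

lemma continuous_hh (m : ℕ) : Continuous (hh m) :=
  (Differentiable.continuous fun x => (hasDerivAt_hh m x).differentiableAt)

lemma continuous_sig (m : ℕ) : Continuous (sig m) := by
  unfold sig Ccos
  exact (continuous_const.mul ((Real.continuous_cos).sub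
    (continuous_finset_sum _ fun k _ =>
      (continuous_const.mul (continuous_pow (2*k))).div_const _)))

lemma continuous_hh1 (m : ℕ) : Continuous (hh1 m) := by
  unfold hh1
  exact (continuous_const.mul (continuous_sig (m+1))).add
    ((continuous_const.mul continuous_id).mul (continuous_rho m))

/-- The key positivity: `phi (m+1) x > 0` for `x > 0`. -/
lemma phi_pos (m : ℕ) {x : ℝ} (hx : 0 < x) : 0 < phi (m+1) x := by
  set M := m + 1 with hM
  -- V and W
  set V : ℝ → ℝ := fun t => phi1 M t * Real.sin t - phi M t * Real.cos t with hV
  set W : ℝ → ℝ := fun t => phi1 M t * Real.cos t + phi M t * Real.sin t with hW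
  have hVd : ∀ t, HasDerivAt V (hh M t * Real.sin t) t := by
    intro t
    have := ((hasDerivAt_phi1 m t).mul (Real.hasDerivAt_sin t)).sub
      ((hasDerivAt_phi M t).mul (Real.hasDerivAt_cos t))
    exact this.congr_deriv (by ring)
  have hWd : ∀ t, HasDerivAt W (hh M t * Real.cos t) t := by
    intro t
    have := ((hasDerivAt_phi1 m t).mul (Real.hasDerivAt_cos t)).add
      ((hasDerivAt_phi M t).mul (Real.hasDerivAt_sin t))
    exact this.congr_deriv (by ring)
  have hint_s : IntervalIntegrable (fun t => hh M t * Real.sin t) MeasureTheory.volume 0 x :=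
    ((continuous_hh M).mul Real.continuous_sin).intervalIntegrable 0 x
  have hint_c : IntervalIntegrable (fun t => hh M t * Real.cos t) MeasureTheory.volume 0 x :=
    ((continuous_hh M).mul Real.continuous_cos).intervalIntegrable 0 x
  have hV0 : V 0 = 0 := by simp [hV, phi_zero]
  have hW0 : W 0 = 0 := by simp [hW, phi1_succ_zero, hM]
  have hVint : ∫ t in (0:ℝ)..x, hh M t * Real.sin t = V x := by
    rw [intervalIntegral.integral_eq_sub_of_hasDerivAt (fun t _ => hVd t) hint_s, hV0, sub_zero]
  have hWint : ∫ t in (0:ℝ)..x, hh M t * Real.cos t = W x := by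
    rw [intervalIntegral.integral_eq_sub_of_hasDerivAt (fun t _ => hWd t) hint_c, hW0, sub_zero]
  -- phi = W sin - V cos
  have hphiWV : phi M x = W x * Real.sin x - V x * Real.cos x := by
    simp only [hV, hW]
    linear_combination (-(phi M x)) * (Real.sin_sq_add_cos_sq x)
  -- phi = ∫ hh (sin x cos t - cos x sin t)
  have hphi_int : phi M x = ∫ t in (0:ℝ)..x, hh M t * Real.sin (x - t) := by
    rw [hphiWV, ← hVint, ← hWint]
    rw [show (∫ t in (0:ℝ)..x, hh M t * Real.sin (x-t))
        = ∫ t in (0:ℝ)..x, (Real.sin x * (hh M t * Real.cos t) - Real.cos x * (hh M t * Real.sin t))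
        from by congr 1; funext t; rw [Real.sin_sub]; ring]
    rw [intervalIntegral.integral_sub (hint_c.const_mul _) (hint_s.const_mul _),
      intervalIntegral.integral_const_mul, intervalIntegral.integral_const_mul]
    ring
  -- integration by parts
  have hκ : ∀ t, HasDerivAt (fun t => hh M t * Real.cos (x - t))
      (hh1 M t * Real.cos (x - t) + hh M t * Real.sin (x - t)) t := by
    intro t
    have hc : HasDerivAt (fun t : ℝ => Real.cos (x - t)) (Real.sin (x - t)) t := by
      have h1 : HasDerivAt (fun t : ℝ => x - t) (-1 : ℝ) t := by
        simpa using (hasDerivAt_id t).const_sub x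
      have := (Real.hasDerivAt_cos (x - t)).comp t h1
      exact this.congr_deriv (by ring)
    exact ((hasDerivAt_hh M t).mul hc).congr_deriv (by ring)
  have hint1 : IntervalIntegrable (fun t => hh1 M t * Real.cos (x - t)) MeasureTheory.volume 0 x :=
    ((continuous_hh1 M).mul (Real.continuous_cos.comp (continuous_const.sub continuous_id))).intervalIntegrable 0 x
  have hint2 : IntervalIntegrable (fun t => hh1 M t * Real.cos (x - t) + hh M t * Real.sin (x - t))
      MeasureTheory.volume 0 x := by
    apply IntervalIntegrable.add hint1
    exact ((continuous_hh M).mul (Real.continuous_sin.comp (continuous_const.sub continuous_id))).intervalIntegrable 0 x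
  have hIBP : ∫ t in (0:ℝ)..x, (hh1 M t * Real.cos (x - t) + hh M t * Real.sin (x - t)) = hh M x := by
    rw [intervalIntegral.integral_eq_sub_of_hasDerivAt (fun t _ => hκ t) hint2]
    simp [hh_zero]
  have hint3 : IntervalIntegrable (hh1 M) MeasureTheory.volume 0 x :=
    (continuous_hh1 M).intervalIntegrable 0 x
  have hFTC2 : ∫ t in (0:ℝ)..x, hh1 M t = hh M x := by
    rw [intervalIntegral.integral_eq_sub_of_hasDerivAt (fun t _ => hasDerivAt_hh M t) hint3]
    simp [hh_zero]
  -- phi M x = ∫ hh1 (1 - cos(x-t))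
  have hrep : phi M x = ∫ t in (0:ℝ)..x, hh1 M t * (1 - Real.cos (x - t)) := by
    have e1 : ∀ t, hh1 M t * (1 - Real.cos (x - t))
        = hh1 M t - hh1 M t * Real.cos (x - t) := by intro t; ring
    have e2 : ∀ t, hh M t * Real.sin (x - t)
        = (hh1 M t * Real.cos (x - t) + hh M t * Real.sin (x - t)) - hh1 M t * Real.cos (x - t) := by
      intro t; ring
    calc phi M x = ∫ t in (0:ℝ)..x, hh M t * Real.sin (x - t) := hphi_int
    _ = (∫ t in (0:ℝ)..x, (hh1 M t * Real.cos (x - t) + hh M t * Real.sin (x - t)))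
        - ∫ t in (0:ℝ)..x, hh1 M t * Real.cos (x - t) := by
        rw [← intervalIntegral.integral_sub hint2 hint1]
        congr 1; funext t; ring
    _ = (∫ t in (0:ℝ)..x, hh1 M t) - ∫ t in (0:ℝ)..x, hh1 M t * Real.cos (x - t) := by
        rw [hIBP, hFTC2]
    _ = ∫ t in (0:ℝ)..x, hh1 M t * (1 - Real.cos (x - t)) := by
        rw [← intervalIntegral.integral_sub hint3 hint1]
        congr 1; funext t; ring
  -- positivity of the integral
  set a : ℝ := x - min x 1 with ha
  have ha0 : 0 ≤ a := by
    rcases le_or_gt x 1 with h | h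
    · simp [ha, min_eq_left h]
    · have : min x 1 = 1 := min_eq_right h.le
      rw [ha, this]; linarith
  have hax : a < x := by
    have : 0 < min x 1 := lt_min hx one_pos
    rw [ha]; linarith
  have hg_cont : Continuous (fun t => hh1 M t * (1 - Real.cos (x - t))) :=
    (continuous_hh1 M).mul (continuous_const.sub
      (Real.continuous_cos.comp (continuous_const.sub continuous_id)))
  have hsplit : (∫ t in (0:ℝ)..x, hh1 M t * (1 - Real.cos (x - t)))
      = (∫ t in (0:ℝ)..a, hh1 M t * (1 - Real.cos (x - t)))
      + ∫ t in a..x, hh1 M t * (1 - Real.cos (x - t)) := by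
    rw [intervalIntegral.integral_add_adjacent_intervals
      (hg_cont.intervalIntegrable 0 a) (hg_cont.intervalIntegrable a x)]
  have hpart1 : 0 ≤ ∫ t in (0:ℝ)..a, hh1 M t * (1 - Real.cos (x - t)) := by
    apply intervalIntegral.integral_nonneg ha0
    intro t ht
    have h1 := hh1_nonneg M (by omega) ht.1
    have h2 : Real.cos (x - t) ≤ 1 := Real.cos_le_one _
    nlinarith
  have hpart2 : 0 < ∫ t in a..x, hh1 M t * (1 - Real.cos (x - t)) := by
    apply intervalIntegral.intervalIntegral_pos_of_pos_on
      (hg_cont.intervalIntegrable a x) _ hax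
    intro t ht
    have ht0 : 0 < t := lt_of_le_of_lt ha0 ht.1
    have h1 := hh1_pos M (by omega) ht0
    have hxt1 : 0 < x - t := by linarith [ht.2]
    have hxt2 : x - t < min x 1 := by
      have : a < t := ht.1
      rw [ha] at this; linarith
    have hxtpi : x - t ≤ Real.pi := by
      have : x - t < 1 := lt_of_lt_of_le hxt2 (min_le_right _ _)
      linarith [Real.pi_gt_three]
    have hcos : Real.cos (x - t) < 1 := by
      have := Real.cos_lt_cos_of_nonneg_of_le_pi (le_refl 0) hxtpi hxt1
      rwa [Real.cos_zero] at this
    nlinarith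
  rw [hrep, hsplit]
  linarith

/-- The `n`-th normalized remainder of the Maclaurin series of sine. -/
noncomputable def Tsin (n : ℕ) (x : ℝ) : ℝ :=
  if x = 0 then 1
  else (-1 : ℝ) ^ n * (Nat.factorial (2 * n + 1)) / x ^ (2 * n + 1) *
    (Real.sin x - ∑ k ∈ Finset.range n, (-1 : ℝ) ^ k * x ^ (2 * k + 1) / (Nat.factorial (2 * k + 1)))

lemma Tsin_eq (m : ℕ) {x : ℝ} (hx : x ≠ 0) :
    Tsin m x = (Nat.factorial (2*m+1) : ℝ) * rho m x / x^(2*m+1) := by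
  unfold Tsin rho Ssin
  rw [if_neg hx]
  ring

lemma Tsin_pos (m : ℕ) (hm : 1 ≤ m) {x : ℝ} (hx : 0 < x) : 0 < Tsin m x := by
  rw [Tsin_eq m hx.ne']
  have h1 := rho_pos m hm hx
  have h2 : (0:ℝ) < x^(2*m+1) := pow_pos hx _
  have h3 : (0:ℝ) < (Nat.factorial (2*m+1) : ℝ) := by
    exact_mod_cast Nat.factorial_pos _
  positivity

lemma Tsin_upper (m : ℕ) {x : ℝ} (hx : 0 < x) :
    (Ac (m+1) + x^2) * Tsin (m+1) x < Ac (m+1) := by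
  have hphi := phi_pos m hx
  unfold phi at hphi
  rw [Tsin_eq (m+1) hx.ne']
  have hxp : (0:ℝ) < x^(2*(m+1)+1) := pow_pos hx _
  have hf : (0:ℝ) < (Nat.factorial (2*(m+1)+1) : ℝ) := by exact_mod_cast Nat.factorial_pos _
  have h1 : (Ac (m+1) + x^2) * rho (m+1) x < Ac (m+1) * x^(2*(m+1)+1) / (Nat.factorial (2*(m+1)+1) : ℝ) := by
    linarith
  have key : (Ac (m+1) + x^2) * rho (m+1) x * (Nat.factorial (2*(m+1)+1) : ℝ)
      < Ac (m+1) * x^(2*(m+1)+1) := by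
    have := (lt_div_iff₀ hf).mp h1
    linarith
  have e : (Ac (m+1) + x^2) * ((Nat.factorial (2*(m+1)+1) : ℝ) * rho (m+1) x / x^(2*(m+1)+1))
      = ((Ac (m+1) + x^2) * rho (m+1) x * (Nat.factorial (2*(m+1)+1) : ℝ)) / x^(2*(m+1)+1) := by
    ring
  rw [e, div_lt_iff₀ hxp]
  exact key

lemma Tsin_rec (m : ℕ) {x : ℝ} (hx : 0 < x) :
    x^2 * Tsin (m+1) x = Ac m * (1 - Tsin m x) := by
  rw [Tsin_eq (m+1) hx.ne', Tsin_eq m hx.ne', rho_succ m x]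
  have hxp : (0:ℝ) < x^(2*m+1) := pow_pos hx _
  have hf1 : (Nat.factorial (2*m+1) : ℝ) ≠ 0 := fact_ne_zero' _
  have e1 : 2*(m+1)+1 = 2*m+3 := by ring
  rw [e1]
  have f1 : (Nat.factorial (2*m+2) : ℝ) = (2*(m:ℝ)+2) * (Nat.factorial (2*m+1)) := by
    have := fact_cast_succ (2*m+1)
    rw [show (2*m+1)+1 = 2*m+2 from by ring] at this
    rw [this]; push_cast; ring
  have f2 : (Nat.factorial (2*m+3) : ℝ) = (2*(m:ℝ)+3) * (Nat.factorial (2*m+2)) := by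
    have := fact_cast_succ (2*m+2)
    rw [show (2*m+2)+1 = 2*m+3 from by ring] at this
    rw [this]; push_cast; ring
  rw [f2, f1]
  unfold Ac
  field_simp
  ring

theorem Tsin_ratio_bounds (n : ℕ) (hn : 2 ≤ n) (x : ℝ) (hx : 0 < x) :
    ((n : ℝ) * (2 * n + 1)) / ((n + 1) * (2 * n + 3)) < Tsin n x / Tsin (n + 1) x ∧
    Tsin n x / Tsin (n + 1) x < 1 := by
  obtain ⟨k, rfl⟩ : ∃ k, n = k + 2 := ⟨n - 2, by omega⟩
  set t0 := Tsin (k+1) x with ht0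
  set t1 := Tsin (k+2) x with ht1
  set t2 := Tsin (k+3) x with ht2
  have hx2 : (0:ℝ) < x^2 := by positivity
  have U1 : (Ac (k+1) + x^2) * t0 < Ac (k+1) := Tsin_upper k hx
  have U2 : (Ac (k+2) + x^2) * t1 < Ac (k+2) := Tsin_upper (k+1) hx
  have rec1 : x^2 * t1 = Ac (k+1) * (1 - t0) := Tsin_rec (k+1) hx
  have rec2 : x^2 * t2 = Ac (k+2) * (1 - t1) := Tsin_rec (k+2) hx
  have pos1 : 0 < t1 := Tsin_pos (k+2) (by omega) hx
  have pos2 : 0 < t2 := Tsin_pos (k+3) (by omega) hx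
  have hA1 : (0:ℝ) < Ac (k+1) := by unfold Ac; positivity
  have hA2 : (0:ℝ) < Ac (k+2) := by unfold Ac; positivity
  constructor
  · -- lower bound
    -- t1 * (Ac (k+1) + x^2) > Ac (k+1)
    have L1 : Ac (k+1) < (Ac (k+1) + x^2) * t1 := by
      nlinarith [U1, rec1]
    -- Ac (k+2) * t1 > Ac (k+1) * t2
    have L2 : Ac (k+1) * t2 < Ac (k+2) * t1 := by
      nlinarith [L1, rec2]
    have hgoal : ((k:ℝ)+2) * (2*((k:ℝ)+2)+1) / ((((k:ℝ)+2)+1) * (2*((k:ℝ)+2)+3))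
        = Ac (k+1) / Ac (k+2) := by
      unfold Ac
      rw [div_eq_div_iff (by positivity) (by positivity)]
      push_cast
      ring
    have : Ac (k+1) / Ac (k+2) < t1 / t2 := by
      rw [div_lt_div_iff₀ hA2 pos2]
      nlinarith [L2]
    push_cast
    calc ((k:ℝ)+2) * (2*((k:ℝ)+2)+1) / ((((k:ℝ)+2)+1) * (2*((k:ℝ)+2)+3))
        = Ac (k+1) / Ac (k+2) := hgoal
      _ < t1 / t2 := this
  · -- upper bound
    have hlt : t1 < t2 := by nlinarith [U2, rec2]
    rw [div_lt_one pos2]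
    exact hlt
end

section
/- For every natural number n, the ratio x ↦ E (n+1) x / E n x is decreasing on all of ℝ. -/
/-- The `n`-th normalized remainder of the Maclaurin series of the exponential. -/
noncomputable def E (n : ℕ) (x : ℝ) : ℝ :=
  if x = 0 then 1
  else (Nat.factorial (n + 1)) / x ^ (n + 1) *
    (Real.exp x - ∑ k ∈ Finset.range (n + 1), x ^ k / (Nat.factorial k))

open intervalIntegral Real

noncomputable def bfun (m : ℕ) (z : ℝ) : ℝ → ℝ := fun u => (1 - u) ^ m * Real.exp (z * u)

noncomputable def Ifun (m : ℕ) (z : ℝ) : ℝ := ∫ u in (0:ℝ)..1, bfun m z u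

lemma bfun_cont (m : ℕ) (z : ℝ) : Continuous (bfun m z) := by
  unfold bfun; fun_prop

lemma bfun_ii (m : ℕ) (z a b : ℝ) : IntervalIntegrable (bfun m z) MeasureTheory.volume a b :=
  (bfun_cont m z).intervalIntegrable a b

lemma Ifun_pos (m : ℕ) (z : ℝ) : 0 < Ifun m z := by
  apply intervalIntegral.intervalIntegral_pos_of_pos_on (bfun_ii m z 0 1)
  · intro u hu
    exact mul_pos (pow_pos (by linarith [hu.2]) m) (Real.exp_pos _)
  · norm_num

lemma Ifun_rec (m : ℕ) (x : ℝ) :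
    x * Ifun (m + 1) x = (m + 1 : ℝ) * Ifun m x - 1 := by
  have hu : ∀ t ∈ Set.uIcc (0:ℝ) 1,
      HasDerivAt (fun t : ℝ => (1 - t) ^ (m + 1))
        (((m+1:ℕ):ℝ) * (1 - t) ^ m * (-1)) t := by
    intro t _
    have h1 : HasDerivAt (fun t : ℝ => 1 - t) (-1) t := by
      simpa using (hasDerivAt_id t).const_sub 1
    simpa using h1.fun_pow (m + 1)
  have hv : ∀ t ∈ Set.uIcc (0:ℝ) 1,
      HasDerivAt (fun t : ℝ => Real.exp (x * t)) (Real.exp (x * t) * x) t := by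
    intro t _
    simpa using ((hasDerivAt_id t).const_mul x).exp
  have hu' : IntervalIntegrable (fun t : ℝ => ((m+1:ℕ):ℝ) * (1 - t) ^ m * (-1))
      MeasureTheory.volume 0 1 := by
    apply Continuous.intervalIntegrable; fun_prop
  have hv' : IntervalIntegrable (fun t : ℝ => Real.exp (x * t) * x)
      MeasureTheory.volume 0 1 := by
    apply Continuous.intervalIntegrable; fun_prop
  have parts := intervalIntegral.integral_mul_deriv_eq_deriv_mul hu hv hu' hv'
  have hL : (∫ t in (0:ℝ)..1, (1 - t) ^ (m + 1) * (Real.exp (x * t) * x))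
      = x * Ifun (m + 1) x := by
    rw [show (fun t : ℝ => (1 - t) ^ (m + 1) * (Real.exp (x * t) * x))
        = fun t : ℝ => x * ((1 - t) ^ (m + 1) * Real.exp (x * t)) from funext fun t => by ring]
    rw [intervalIntegral.integral_const_mul]
    rfl
  have hR : (∫ t in (0:ℝ)..1, ((m+1:ℕ):ℝ) * (1 - t) ^ m * (-1) * Real.exp (x * t))
      = -(((m+1:ℕ):ℝ) * Ifun m x) := by
    rw [show (fun t : ℝ => ((m+1:ℕ):ℝ) * (1 - t) ^ m * (-1) * Real.exp (x * t))
        = fun t : ℝ => (-((m+1:ℕ):ℝ)) * ((1 - t) ^ m * Real.exp (x * t)) from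
        funext fun t => by ring]
    rw [intervalIntegral.integral_const_mul]
    unfold Ifun bfun
    ring
  rw [hL, hR] at parts
  rw [parts]
  push_cast
  norm_num
  try linarith


lemma Ifun_zero_pow (x : ℝ) : x * Ifun 0 x = Real.exp x - 1 := by
  have hu : ∀ t ∈ Set.uIcc (0:ℝ) 1,
      HasDerivAt (fun _ : ℝ => (1:ℝ)) (0:ℝ) t := fun t _ => hasDerivAt_const t 1
  have hv : ∀ t ∈ Set.uIcc (0:ℝ) 1,
      HasDerivAt (fun t : ℝ => Real.exp (x * t)) (Real.exp (x * t) * x) t := by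
    intro t _
    simpa using ((hasDerivAt_id t).const_mul x).exp
  have hu' : IntervalIntegrable (fun _ : ℝ => (0:ℝ)) MeasureTheory.volume 0 1 :=
    intervalIntegrable_const
  have hv' : IntervalIntegrable (fun t : ℝ => Real.exp (x * t) * x)
      MeasureTheory.volume 0 1 := by
    apply Continuous.intervalIntegrable; fun_prop
  have parts := intervalIntegral.integral_mul_deriv_eq_deriv_mul hu hv hu' hv'
  simp only [one_mul, zero_mul, mul_one, mul_zero, intervalIntegral.integral_zero] at parts
  have hL : (∫ t in (0:ℝ)..1, Real.exp (x * t) * x) = x * Ifun 0 x := by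
    rw [show (fun t : ℝ => Real.exp (x * t) * x)
        = fun t : ℝ => x * ((1 - t) ^ 0 * Real.exp (x * t)) from funext fun t => by ring]
    rw [intervalIntegral.integral_const_mul]
    rfl
  rw [hL] at parts
  rw [parts]
  norm_num

lemma remainder_eq (m : ℕ) (x : ℝ) :
    x ^ (m + 1) / (Nat.factorial m) * Ifun m x
      = Real.exp x - ∑ k ∈ Finset.range (m + 1), x ^ k / (Nat.factorial k) := by
  induction m with
  | zero =>
    simp [Nat.factorial]
    have := Ifun_zero_pow x
    linarith
  | succ m ih =>
    have hrec := Ifun_rec m x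
    have hfac : ((Nat.factorial (m+1)):ℝ) = ((m:ℝ)+1) * (Nat.factorial m) := by
      rw [Nat.factorial_succ]; push_cast; ring
    have hfac0 : ((Nat.factorial m):ℝ) ≠ 0 := by
      exact_mod_cast Nat.factorial_ne_zero m
    have hm1 : ((m:ℝ)+1) ≠ 0 := by positivity
    have key : x ^ (m + 1 + 1) / (Nat.factorial (m+1)) * Ifun (m+1) x
        = x ^ (m+1) / (Nat.factorial (m+1)) * (x * Ifun (m+1) x) := by ring
    have ihv : Real.exp x = x ^ (m+1) / (Nat.factorial m) * Ifun m x
        + ∑ k ∈ Finset.range (m+1), x ^ k / (Nat.factorial k) := by linarith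
    rw [Finset.sum_range_succ, ihv, key, hrec, hfac]
    field_simp
    ring

lemma Ifun_at_zero (m : ℕ) : Ifun m 0 = 1 / ((m:ℝ) + 1) := by
  unfold Ifun bfun
  simp only [zero_mul, Real.exp_zero, mul_one]
  rw [intervalIntegral.integral_comp_sub_left (fun u : ℝ => u ^ m) 1]
  norm_num

lemma E_eq (m : ℕ) (x : ℝ) : E m x = ((m:ℝ) + 1) * Ifun m x := by
  unfold E
  by_cases hx : x = 0
  · subst hx
    rw [if_pos rfl, Ifun_at_zero]
    field_simp
  · rw [if_neg hx, ← remainder_eq]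
    have hfac : ((Nat.factorial (m+1)):ℝ) = ((m:ℝ)+1) * (Nat.factorial m) := by
      rw [Nat.factorial_succ]; push_cast; ring
    have hfac0 : ((Nat.factorial m):ℝ) ≠ 0 := by
      exact_mod_cast Nat.factorial_ne_zero m
    have hxp : x ^ (m+1) ≠ 0 := pow_ne_zero _ hx
    rw [hfac]
    field_simp

lemma Ifun_swap (n : ℕ) {x y : ℝ} (hxy : x ≤ y) :
    Ifun (n + 1) y * Ifun n x ≤ Ifun (n + 1) x * Ifun n y := by
  -- pointwise inequality
  have hpt : ∀ t ∈ Set.Icc (0:ℝ) 1, ∀ s ∈ Set.Icc (0:ℝ) 1,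
      0 ≤ bfun (n+1) x t * bfun n y s + bfun n y t * bfun (n+1) x s
        - bfun (n+1) y t * bfun n x s - bfun n x t * bfun (n+1) y s := by
    intro t ht s hs
    have hAB : 0 ≤ (s - t) *
        (Real.exp (x * t) * Real.exp (y * s) - Real.exp (x * s) * Real.exp (y * t)) := by
      rw [← Real.exp_add, ← Real.exp_add]
      rcases le_total t s with h | h
      · apply mul_nonneg (by linarith)
        have := Real.exp_le_exp.mpr (show x * s + y * t ≤ x * t + y * s by nlinarith)
        linarith
      · have h2 := Real.exp_le_exp.mpr (show x * t + y * s ≤ x * s + y * t by nlinarith)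
        nlinarith
    have hpt' : (0:ℝ) ≤ (1 - t) ^ n := pow_nonneg (by linarith [ht.2]) n
    have hps' : (0:ℝ) ≤ (1 - s) ^ n := pow_nonneg (by linarith [hs.2]) n
    have hid : bfun (n+1) x t * bfun n y s + bfun n y t * bfun (n+1) x s
        - bfun (n+1) y t * bfun n x s - bfun n x t * bfun (n+1) y s
        = (1 - t) ^ n * (1 - s) ^ n * ((s - t) *
          (Real.exp (x * t) * Real.exp (y * s) - Real.exp (x * s) * Real.exp (y * t))) := by
      unfold bfun
      ring
    rw [hid]
    exact mul_nonneg (mul_nonneg hpt' hps') hAB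
  -- inner integral computation
  have inner : ∀ t : ℝ,
      (∫ s in (0:ℝ)..1, (bfun (n+1) x t * bfun n y s + bfun n y t * bfun (n+1) x s
        - bfun (n+1) y t * bfun n x s - bfun n x t * bfun (n+1) y s))
      = bfun (n+1) x t * Ifun n y + bfun n y t * Ifun (n+1) x
        - bfun (n+1) y t * Ifun n x - bfun n x t * Ifun (n+1) y := by
    intro t
    rw [intervalIntegral.integral_sub, intervalIntegral.integral_sub,
        intervalIntegral.integral_add]
    · rw [intervalIntegral.integral_const_mul, intervalIntegral.integral_const_mul,
          intervalIntegral.integral_const_mul, intervalIntegral.integral_const_mul]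
      rfl
    · exact (bfun_ii n y 0 1).const_mul _
    · exact (bfun_ii (n+1) x 0 1).const_mul _
    · exact ((bfun_ii n y 0 1).const_mul _).add ((bfun_ii (n+1) x 0 1).const_mul _)
    · exact (bfun_ii n x 0 1).const_mul _
    · exact (((bfun_ii n y 0 1).const_mul _).add ((bfun_ii (n+1) x 0 1).const_mul _)).sub
        ((bfun_ii n x 0 1).const_mul _)
    · exact (bfun_ii (n+1) y 0 1).const_mul _
  -- outer integral nonneg
  have houter : 0 ≤ ∫ t in (0:ℝ)..1,
      (bfun (n+1) x t * Ifun n y + bfun n y t * Ifun (n+1) x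
        - bfun (n+1) y t * Ifun n x - bfun n x t * Ifun (n+1) y) := by
    apply intervalIntegral.integral_nonneg zero_le_one
    intro t ht
    rw [← inner t]
    apply intervalIntegral.integral_nonneg zero_le_one
    intro s hs
    exact hpt t ht s hs
  -- compute outer integral
  have hcalc : (∫ t in (0:ℝ)..1,
      (bfun (n+1) x t * Ifun n y + bfun n y t * Ifun (n+1) x
        - bfun (n+1) y t * Ifun n x - bfun n x t * Ifun (n+1) y))
      = 2 * (Ifun (n+1) x * Ifun n y) - 2 * (Ifun (n+1) y * Ifun n x) := by
    rw [intervalIntegral.integral_sub, intervalIntegral.integral_sub,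
        intervalIntegral.integral_add]
    · rw [intervalIntegral.integral_mul_const, intervalIntegral.integral_mul_const,
          intervalIntegral.integral_mul_const, intervalIntegral.integral_mul_const]
      show Ifun (n+1) x * Ifun n y + Ifun n y * Ifun (n+1) x
        - Ifun (n+1) y * Ifun n x - Ifun n x * Ifun (n+1) y = _
      ring
    · exact (bfun_ii (n+1) x 0 1).mul_const _
    · exact (bfun_ii n y 0 1).mul_const _
    · exact ((bfun_ii (n+1) x 0 1).mul_const _).add ((bfun_ii n y 0 1).mul_const _)
    · exact (bfun_ii (n+1) y 0 1).mul_const _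
    · exact (((bfun_ii (n+1) x 0 1).mul_const _).add ((bfun_ii n y 0 1).mul_const _)).sub
        ((bfun_ii (n+1) y 0 1).mul_const _)
    · exact (bfun_ii n x 0 1).mul_const _
  rw [hcalc] at houter
  linarith

theorem E_ratio_antitone (n : ℕ) :
    Antitone (fun x => E (n + 1) x / E n x) := by
  intro a b hab
  show E (n + 1) b / E n b ≤ E (n + 1) a / E n a
  rw [E_eq, E_eq, E_eq, E_eq]
  have h1a : (0:ℝ) < ((n:ℝ) + 1 + 1) * Ifun (n+1) a :=
    mul_pos (by positivity) (Ifun_pos _ _)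
  have h0a : (0:ℝ) < ((n:ℝ) + 1) * Ifun n a := mul_pos (by positivity) (Ifun_pos _ _)
  have h0b : (0:ℝ) < ((n:ℝ) + 1) * Ifun n b := mul_pos (by positivity) (Ifun_pos _ _)
  rw [div_le_div_iff₀ h0b h0a]
  push_cast
  have hswap := Ifun_swap n hab
  nlinarith [mul_le_mul_of_nonneg_left hswap
    (show (0:ℝ) ≤ ((n:ℝ) + 2) * ((n:ℝ) + 1) by positivity)]
end
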